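/- arXiv:2303.12480 — 2 statements merged into one kernel-verified Lean document; each statement's English description precedes it below -/
import Mathlib

section
/- For every l ≥ 1 and every x ∈ [0,1), dB¹_l(x)·dB²_l(x) = 0; and for every integer N ≥ 1 and 0 ≤ n < N⁴, E[dX¹_{n+1}·dX²_{n+1} | F_{nN}] = 0 almost everywhere. -/
open MeasureTheory Filter
open scoped ENNReal MeasureTheory

noncomputable section

/-- Lebesgue measure restricted to `Ω = [0,1)`. -/
def P : Measure ℝ := volume.restrict (Set.Ico 0 1)

/-- Rademacher variable `ε_k` : `+1` on the right half of the dyadic interval of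
generation `k` containing `x`, `-1` otherwise. -/
def rad (k : ℕ) (x : ℝ) : ℝ := if Odd ⌊(2 : ℝ) ^ (k + 1) * x⌋ then 1 else -1

/-- Increment `dB¹_l = 1{ε_{l-1} = -1} ε_l √(2δ)`. -/
def dB1 (δ : ℝ) (l : ℕ) (x : ℝ) : ℝ :=
  (if rad (l - 1) x = -1 then 1 else 0) * rad l x * Real.sqrt (2 * δ)

/-- Increment `dB²_l = 1{ε_{l-1} = +1} ε_l √(2δ)`. -/
def dB2 (δ : ℝ) (l : ℕ) (x : ℝ) : ℝ :=
  (if rad (l - 1) x = 1 then 1 else 0) * rad l x * Real.sqrt (2 * δ)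

/-- First coordinate of the discrete random walk. -/
def B1 (δ : ℝ) (k : ℕ) (x : ℝ) : ℝ := ∑ l ∈ Finset.Icc 1 k, dB1 δ l x

/-- Second coordinate of the discrete random walk. -/
def B2 (δ : ℝ) (k : ℕ) (x : ℝ) : ℝ := ∑ l ∈ Finset.Icc 1 k, dB2 δ l x

/-- The planar random walk `B_k = (B¹_k, B²_k)`. -/
def Bpt (δ : ℝ) (k : ℕ) (x : ℝ) : ℝ × ℝ := (B1 δ k x, B2 δ k x)

/-- Euclidean norm of the planar walk at step `k`. -/
def Bnorm (δ : ℝ) (k : ℕ) (x : ℝ) : ℝ := Real.sqrt (B1 δ k x ^ 2 + B2 δ k x ^ 2)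

/-- Coarse increment `dX¹_{n+1} = Σ_{l=1}^N dB¹_{nN+l}`. -/
def dX1 (δ : ℝ) (N n : ℕ) (x : ℝ) : ℝ := ∑ l ∈ Finset.Icc 1 N, dB1 δ (n * N + l) x

/-- Coarse increment `dX²_{n+1} = Σ_{l=1}^N dB²_{nN+l}`. -/
def dX2 (δ : ℝ) (N n : ℕ) (x : ℝ) : ℝ := ∑ l ∈ Finset.Icc 1 N, dB2 δ (n * N + l) x

/-- The σ-algebra `F_k` generated by `ε_0, …, ε_k`. -/
def Ffil (k : ℕ) : MeasurableSpace ℝ :=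
  ⨆ i ∈ Finset.Iic k, MeasurableSpace.comap (rad i) (inferInstance : MeasurableSpace ℝ)

/-- The stopping index `n_ε(x)` : the minimum of `N⁴` and the first `n ∈ [1, N⁴]`
with `|X_n(x)| > 1 - ε`, where `X_n = B_{nN}`. -/
def nstop (δ ε : ℝ) (N : ℕ) (x : ℝ) : ℕ :=
  sInf (insert (N ^ 4) {n | 1 ≤ n ∧ n ≤ N ^ 4 ∧ 1 - ε < Bnorm δ (n * N) x})

/-! ### Auxiliary lemmas -/

instance : IsFiniteMeasure P := by
  constructor
  simp only [P, Measure.restrict_apply MeasurableSet.univ, Set.univ_inter, Real.volume_Ico]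
  exact ENNReal.ofReal_lt_top

lemma measurable_rad (k : ℕ) : Measurable (rad k) := by
  have h : Measurable fun x : ℝ => ⌊(2:ℝ)^(k+1) * x⌋ := (measurable_const.mul measurable_id).floor
  have hset : MeasurableSet ((fun x : ℝ => ⌊(2:ℝ)^(k+1) * x⌋) ⁻¹' {n | Odd n}) :=
    h .of_discrete
  exact Measurable.ite hset measurable_const measurable_const

lemma rad_val (k : ℕ) (x : ℝ) : rad k x = 1 ∨ rad k x = -1 := by
  unfold rad; split <;> simp

lemma abs_rad_le (k : ℕ) (x : ℝ) : |rad k x| ≤ 1 := by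
  unfold rad; split <;> simp

lemma int_floor_div (a : ℝ) (n : ℕ) (hn : 0 < n) : ⌊a / (n:ℝ)⌋ = ⌊a⌋ / (n:ℤ) := by
  refine eq_of_forall_le_iff fun z => ?_
  rw [Int.le_floor, le_div_iff₀ (by exact_mod_cast hn),
    Int.le_ediv_iff_mul_le (by exact_mod_cast hn), Int.le_floor]
  push_cast
  rfl

lemma floor_level (i L : ℕ) (h : i ≤ L) (x : ℝ) :
    ⌊(2:ℝ)^i * x⌋ = ⌊(2:ℝ)^L * x⌋ / (2^(L-i) : ℤ) := by
  have hpow : ((2:ℝ)^(L-i) * (2:ℝ)^i) = 2^L := by rw [← pow_add]; congr 1; omega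
  have h1 : (2:ℝ)^i * x = ((2:ℝ)^L * x) / ((2^(L-i) : ℕ) : ℝ) := by
    push_cast
    rw [eq_div_iff (by positivity)]
    linear_combination x * hpow
  rw [h1, int_floor_div _ _ (by positivity)]
  norm_num

lemma rad_of_floor (i L : ℕ) (h : i + 1 ≤ L) (x : ℝ) :
    rad i x = if Odd (⌊(2:ℝ)^L * x⌋ / (2^(L-(i+1)) : ℤ)) then 1 else -1 := by
  rw [rad, floor_level (i+1) L h x]

lemma integrableOn_const_mul_rad (c : ℝ) (L : ℕ) (s : Set ℝ) (μ : Measure ℝ)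
    (hμs : μ s ≠ ⊤) : IntegrableOn (fun x => c * rad L x) s μ := by
  haveI : IsFiniteMeasure (μ.restrict s) :=
    ⟨by rwa [Measure.restrict_apply_univ, lt_top_iff_ne_top]⟩
  refine ⟨(measurable_const.mul (measurable_rad L)).aestronglyMeasurable, ?_⟩
  refine HasFiniteIntegral.of_bounded (C := |c|) (Filter.Eventually.of_forall fun x => ?_)
  rw [Real.norm_eq_abs, abs_mul]
  nlinarith [abs_rad_le L x, abs_nonneg c, abs_nonneg (rad L x)]

lemma integral_rad (L : ℕ) (m : ℤ) :
    ∫ x in Set.Ico ((m:ℝ)/2^L) (((m:ℝ)+1)/2^L), rad L x = 0 := by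
  have h2 : (0:ℝ) < 2^L := by positivity
  have h2' : (0:ℝ) < 2^(L+1) := by positivity
  set a := (m:ℝ)/2^L with ha
  set c := (2*(m:ℝ)+1)/2^(L+1) with hc
  set b := ((m:ℝ)+1)/2^L with hb
  have hac : a ≤ c := by
    rw [ha, hc, div_le_div_iff₀ h2 h2', pow_succ]; ring_nf; nlinarith
  have hcb : c ≤ b := by
    rw [hc, hb, div_le_div_iff₀ h2' h2, pow_succ]; nlinarith
  have hsplit : Set.Ico a b = Set.Ico a c ∪ Set.Ico c b :=
    (Set.Ico_union_Ico_eq_Ico hac hcb).symm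
  have hleft : ∀ x ∈ Set.Ico a c, rad L x = -1 := by
    intro x hx
    have hfl : ⌊(2:ℝ)^(L+1) * x⌋ = 2*m := by
      rw [Int.floor_eq_iff]
      constructor
      · push_cast
        have := hx.1
        rw [ha, div_le_iff₀ h2] at this
        rw [pow_succ]
        nlinarith
      · push_cast
        have := hx.2
        rw [hc, lt_div_iff₀ h2'] at this
        nlinarith
    unfold rad
    rw [hfl, if_neg (by simp [Int.even_mul, parity_simps])]
  have hright : ∀ x ∈ Set.Ico c b, rad L x = 1 := by
    intro x hx
    have hfl : ⌊(2:ℝ)^(L+1) * x⌋ = 2*m+1 := by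
      rw [Int.floor_eq_iff]
      constructor
      · push_cast
        have := hx.1
        rw [hc, div_le_iff₀ h2'] at this
        nlinarith
      · push_cast
        have := hx.2
        rw [hb, lt_div_iff₀ h2] at this
        rw [pow_succ]
        nlinarith
    unfold rad
    rw [hfl, if_pos (by exact ⟨m, by ring⟩)]
  rw [hsplit, setIntegral_union (Set.Ico_disjoint_Ico_same) measurableSet_Ico
      ((integrableOn_const (hs := measure_Ico_lt_top.ne)).congr_fun
        (fun x hx => (hleft x hx).symm) measurableSet_Ico)
      ((integrableOn_const (hs := measure_Ico_lt_top.ne)).congr_fun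
        (fun x hx => (hright x hx).symm) measurableSet_Ico)]
  rw [setIntegral_congr_fun measurableSet_Ico hleft,
      setIntegral_congr_fun measurableSet_Ico hright]
  rw [setIntegral_const, setIntegral_const, Real.volume_real_Ico_of_le hac, Real.volume_real_Ico_of_le hcb]
  have e1 : c - a = 1/2^(L+1) := by
    rw [ha, hc]; field_simp; ring
  have e2 : b - c = 1/2^(L+1) := by
    rw [hb, hc]; field_simp; ring
  rw [e1, e2]
  simp

lemma floor_eq_on_Ico {L : ℕ} {m : ℤ} {x : ℝ}
    (hx : x ∈ Set.Ico ((m:ℝ)/2^L) (((m:ℝ)+1)/2^L)) : ⌊(2:ℝ)^L * x⌋ = m := by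
  have h2 : (0:ℝ) < 2^L := by positivity
  obtain ⟨h1x, h2x⟩ := hx
  rw [div_le_iff₀ h2] at h1x
  rw [lt_div_iff₀ h2] at h2x
  rw [Int.floor_eq_iff]
  constructor <;> push_cast <;> nlinarith

lemma floor_eq_on_Ico' {L : ℕ} {m : ℕ} {x : ℝ}
    (hx : x ∈ Set.Ico ((m:ℝ)/2^L) (((m:ℝ)+1)/2^L)) : ⌊(2:ℝ)^L * x⌋ = (m:ℤ) := by
  apply floor_eq_on_Ico (m := (m:ℤ))
  push_cast
  exact hx

lemma integral_rad_nat (L m : ℕ) :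
    ∫ x in Set.Ico ((m:ℝ)/2^L) (((m:ℝ)+1)/2^L), rad L x = 0 := by
  have := integral_rad L (m:ℤ)
  push_cast at this
  exact this

lemma measurable_floorMap (j : ℕ) : Measurable fun x : ℝ => ⌊(2:ℝ)^j * x⌋ :=
  (measurable_const.mul measurable_id).floor

/-- The key vanishing lemma: integrating `G(⌊2^L x⌋) · rad L x` over any set determined
by `⌊2^(k+1) ·⌋` gives zero, provided `k + 1 ≤ L`. -/
lemma key (k L : ℕ) (hkL : k + 1 ≤ L) (S : Set ℤ) (G : ℤ → ℝ) :
    ∫ x in (fun x : ℝ => ⌊(2:ℝ)^(k+1) * x⌋) ⁻¹' S,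
      G ⌊(2:ℝ)^L * x⌋ * rad L x ∂P = 0 := by
  have h2 : (0:ℝ) < 2^L := by positivity
  have hs : MeasurableSet ((fun x : ℝ => ⌊(2:ℝ)^(k+1) * x⌋) ⁻¹' S) :=
    measurable_floorMap (k+1) .of_discrete
  simp only [P]
  rw [Measure.restrict_restrict hs]
  have hcover : (fun x : ℝ => ⌊(2:ℝ)^(k+1) * x⌋) ⁻¹' S ∩ Set.Ico (0:ℝ) 1
      = ⋃ m ∈ Finset.range (2^L),
        ((fun x : ℝ => ⌊(2:ℝ)^(k+1) * x⌋) ⁻¹' S ∩ Set.Ico ((m:ℝ)/2^L) (((m:ℝ)+1)/2^L)) := by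
    ext x
    simp only [Set.mem_inter_iff, Set.mem_Ico, Set.mem_iUnion, Finset.mem_range,
      Set.mem_preimage, exists_prop]
    constructor
    · rintro ⟨hxS, hx0, hx1⟩
      have hnn : 0 ≤ ⌊(2:ℝ)^L * x⌋ := Int.floor_nonneg.mpr (by positivity)
      have hlt : ⌊(2:ℝ)^L * x⌋ < ((2^L : ℕ) : ℤ) := by
        rw [Int.floor_lt]; push_cast; nlinarith
      refine ⟨⌊(2:ℝ)^L * x⌋.toNat, by omega, hxS, ?_, ?_⟩
      · rw [div_le_iff₀ h2]
        have := Int.floor_le ((2:ℝ)^L * x)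
        have hc : ((⌊(2:ℝ)^L * x⌋.toNat : ℕ) : ℝ) = ((⌊(2:ℝ)^L * x⌋ : ℤ) : ℝ) := by
          exact_mod_cast congrArg (fun z : ℤ => (z : ℝ)) (Int.toNat_of_nonneg hnn)
        rw [hc]
        nlinarith
      · rw [lt_div_iff₀ h2]
        have := Int.lt_floor_add_one ((2:ℝ)^L * x)
        have hc : ((⌊(2:ℝ)^L * x⌋.toNat : ℕ) : ℝ) = ((⌊(2:ℝ)^L * x⌋ : ℤ) : ℝ) := by
          exact_mod_cast congrArg (fun z : ℤ => (z : ℝ)) (Int.toNat_of_nonneg hnn)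
        rw [hc]
        nlinarith
    · rintro ⟨m, hm, hxS, h1, h2x⟩
      refine ⟨hxS, ?_, ?_⟩
      · have : (0:ℝ) ≤ (m:ℝ)/2^L := by positivity
        linarith
      · have hm' : ((m:ℝ)+1) ≤ 2^L := by
          have : (m+1 : ℕ) ≤ 2^L := hm
          exact_mod_cast this
        have := (lt_div_iff₀ h2).mp h2x
        nlinarith
  rw [hcover]
  have hJ : ∀ m : ℕ, MeasurableSet (Set.Ico ((m:ℝ)/2^L) (((m:ℝ)+1)/2^L)) :=
    fun m => measurableSet_Ico
  have hmono : ∀ m : ℕ,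
      volume ((fun x : ℝ => ⌊(2:ℝ)^(k+1) * x⌋) ⁻¹' S ∩ Set.Ico ((m:ℝ)/2^L) (((m:ℝ)+1)/2^L)) ≠ ⊤ := by
    intro m
    refine ne_of_lt (lt_of_le_of_lt (measure_mono Set.inter_subset_right) ?_)
    exact measure_Ico_lt_top
  have hint : ∀ m ∈ Finset.range (2^L),
      IntegrableOn (fun x => G ⌊(2:ℝ)^L * x⌋ * rad L x)
        ((fun x : ℝ => ⌊(2:ℝ)^(k+1) * x⌋) ⁻¹' S ∩ Set.Ico ((m:ℝ)/2^L) (((m:ℝ)+1)/2^L)) volume := by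
    intro m _
    refine (integrableOn_const_mul_rad (G (m:ℤ)) L _ volume (hmono m)).congr_fun
      (fun x hx => ?_) (hs.inter (hJ m))
    rw [floor_eq_on_Ico' hx.2]
  have hdisj : Set.Pairwise (↑(Finset.range (2^L)))
      (Function.onFun Disjoint fun m : ℕ =>
        (fun x : ℝ => ⌊(2:ℝ)^(k+1) * x⌋) ⁻¹' S ∩ Set.Ico ((m:ℝ)/2^L) (((m:ℝ)+1)/2^L)) := by
    intro i _ j _ hij
    refine Disjoint.mono Set.inter_subset_right Set.inter_subset_right ?_
    rw [Set.Ico_disjoint_Ico]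
    rcases lt_or_gt_of_ne hij with h | h
    · have : ((i:ℝ)+1) ≤ (j:ℝ) := by exact_mod_cast h
      refine le_trans (min_le_left _ _) (le_trans ?_ (le_max_right _ _))
      gcongr
    · have : ((j:ℝ)+1) ≤ (i:ℝ) := by exact_mod_cast h
      refine le_trans (min_le_right _ _) (le_trans ?_ (le_max_left _ _))
      gcongr
  rw [integral_biUnion_finset _ (fun m _ => hs.inter (hJ m)) hdisj hint]
  refine Finset.sum_eq_zero fun m _ => ?_
  by_cases hcm : ((m:ℤ) / (2^(L-(k+1)) : ℤ) : ℤ) ∈ S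
  · have hseq : (fun x : ℝ => ⌊(2:ℝ)^(k+1) * x⌋) ⁻¹' S ∩ Set.Ico ((m:ℝ)/2^L) (((m:ℝ)+1)/2^L)
        = Set.Ico ((m:ℝ)/2^L) (((m:ℝ)+1)/2^L) := by
      refine Set.inter_eq_self_of_subset_right fun x hx => ?_
      have : ⌊(2:ℝ)^(k+1) * x⌋ = ((m:ℤ) / (2^(L-(k+1)) : ℤ) : ℤ) := by
        rw [floor_level (k+1) L hkL, floor_eq_on_Ico' hx]
      simpa [Set.mem_preimage, this] using hcm
    rw [hseq]
    rw [setIntegral_congr_fun (hJ m) (g := fun x => G (m:ℤ) * rad L x)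
      (fun x hx => by rw [floor_eq_on_Ico' hx])]
    rw [integral_const_mul, integral_rad_nat]
    ring
  · have hseq : (fun x : ℝ => ⌊(2:ℝ)^(k+1) * x⌋) ⁻¹' S ∩ Set.Ico ((m:ℝ)/2^L) (((m:ℝ)+1)/2^L)
        = ∅ := by
      ext x
      simp only [Set.mem_inter_iff, Set.mem_preimage, Set.mem_empty_iff_false, iff_false,
        not_and]
      intro hxS hx
      have : ⌊(2:ℝ)^(k+1) * x⌋ = ((m:ℤ) / (2^(L-(k+1)) : ℤ) : ℤ) := by
        rw [floor_level (k+1) L hkL, floor_eq_on_Ico' hx]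
      rw [this] at hxS
      exact hcm hxS
    rw [hseq]
    simp

lemma cross1 (δ : ℝ) (k a b : ℕ) (ha : 1 ≤ a) (hab : a < b) (S : Set ℤ) :
    ∫ x in (fun x : ℝ => ⌊(2:ℝ)^(k+1) * x⌋) ⁻¹' S,
      dB1 δ (k+a) x * dB2 δ (k+b) x ∂P = 0 := by
  have hs : MeasurableSet ((fun x : ℝ => ⌊(2:ℝ)^(k+1) * x⌋) ⁻¹' S) :=
    measurable_floorMap (k+1) .of_discrete
  refine Eq.trans ?_ (key k (k+b) (by omega) S (fun m =>
    (if (if Odd (m / (2^(k+b-(k+a-1+1)) : ℤ)) then (1:ℝ) else -1) = -1 then (1:ℝ) else 0) *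
    (if Odd (m / (2^(k+b-(k+a+1)) : ℤ)) then (1:ℝ) else -1) *
    (if (if Odd (m / (2^(k+b-(k+b-1+1)) : ℤ)) then (1:ℝ) else -1) = 1 then (1:ℝ) else 0) *
    (Real.sqrt (2*δ) * Real.sqrt (2*δ))))
  refine setIntegral_congr_fun hs fun x _ => ?_
  rw [dB1, dB2, rad_of_floor (k+a-1) (k+b) (by omega), rad_of_floor (k+a) (k+b) (by omega),
    rad_of_floor (k+b-1) (k+b) (by omega)]
  ring

lemma cross2 (δ : ℝ) (k a b : ℕ) (hb : 1 ≤ b) (hba : b < a) (S : Set ℤ) :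
    ∫ x in (fun x : ℝ => ⌊(2:ℝ)^(k+1) * x⌋) ⁻¹' S,
      dB1 δ (k+a) x * dB2 δ (k+b) x ∂P = 0 := by
  have hs : MeasurableSet ((fun x : ℝ => ⌊(2:ℝ)^(k+1) * x⌋) ⁻¹' S) :=
    measurable_floorMap (k+1) .of_discrete
  refine Eq.trans ?_ (key k (k+a) (by omega) S (fun m =>
    (if (if Odd (m / (2^(k+a-(k+a-1+1)) : ℤ)) then (1:ℝ) else -1) = -1 then (1:ℝ) else 0) *
    (if (if Odd (m / (2^(k+a-(k+b-1+1)) : ℤ)) then (1:ℝ) else -1) = 1 then (1:ℝ) else 0) *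
    (if Odd (m / (2^(k+a-(k+b+1)) : ℤ)) then (1:ℝ) else -1) *
    (Real.sqrt (2*δ) * Real.sqrt (2*δ))))
  refine setIntegral_congr_fun hs fun x _ => ?_
  rw [dB1, dB2, rad_of_floor (k+a-1) (k+a) (by omega), rad_of_floor (k+b-1) (k+a) (by omega),
    rad_of_floor (k+b) (k+a) (by omega)]
  ring

lemma diag (δ : ℝ) (l : ℕ) (x : ℝ) : dB1 δ l x * dB2 δ l x = 0 := by
  unfold dB1 dB2
  rcases rad_val (l-1) x with h | h <;> rw [h] <;> norm_num

lemma measurable_dB1 (δ : ℝ) (l : ℕ) : Measurable (dB1 δ l) := by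
  unfold dB1
  have h1 : MeasurableSet {x : ℝ | rad (l-1) x = -1} :=
    measurable_rad (l-1) (measurableSet_singleton (-1))
  exact ((Measurable.ite h1 measurable_const measurable_const).mul (measurable_rad l)).mul
    measurable_const

lemma measurable_dB2 (δ : ℝ) (l : ℕ) : Measurable (dB2 δ l) := by
  unfold dB2
  have h1 : MeasurableSet {x : ℝ | rad (l-1) x = 1} :=
    measurable_rad (l-1) (measurableSet_singleton 1)
  exact ((Measurable.ite h1 measurable_const measurable_const).mul (measurable_rad l)).mul
    measurable_const

lemma abs_dB1_le (δ : ℝ) (l : ℕ) (x : ℝ) : |dB1 δ l x| ≤ Real.sqrt (2*δ) := by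
  unfold dB1
  rw [abs_mul, abs_mul, abs_of_nonneg (Real.sqrt_nonneg _)]
  refine mul_le_of_le_one_left (Real.sqrt_nonneg _) ?_
  have h1 : |if rad (l-1) x = -1 then (1:ℝ) else 0| ≤ 1 := by split <;> simp
  have h2 := abs_rad_le l x
  nlinarith [abs_nonneg (rad l x), abs_nonneg (if rad (l-1) x = -1 then (1:ℝ) else 0)]

lemma abs_dB2_le (δ : ℝ) (l : ℕ) (x : ℝ) : |dB2 δ l x| ≤ Real.sqrt (2*δ) := by
  unfold dB2
  rw [abs_mul, abs_mul, abs_of_nonneg (Real.sqrt_nonneg _)]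
  refine mul_le_of_le_one_left (Real.sqrt_nonneg _) ?_
  have h1 : |if rad (l-1) x = 1 then (1:ℝ) else 0| ≤ 1 := by split <;> simp
  have h2 := abs_rad_le l x
  nlinarith [abs_nonneg (rad l x), abs_nonneg (if rad (l-1) x = 1 then (1:ℝ) else 0)]

lemma integrable_bounded {f : ℝ → ℝ} (hf : Measurable f) (C : ℝ) (hC : ∀ x, |f x| ≤ C) :
    Integrable f P :=
  ⟨hf.aestronglyMeasurable,
    HasFiniteIntegral.of_bounded (C := C)
      (Filter.Eventually.of_forall fun x => by simpa using hC x)⟩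

/-- the increments `dB¹_l` and `dB²_l` are pointwise orthogonal, and the
mixed conditional second moment of the coarse increments vanishes. -/
theorem statement8 (δ : ℝ) (hδ : 0 < δ) :
    (∀ l : ℕ, 1 ≤ l → ∀ x ∈ Set.Ico (0 : ℝ) 1, dB1 δ l x * dB2 δ l x = 0) ∧
    (∀ N : ℕ, 1 ≤ N → ∀ n : ℕ, n < N ^ 4 →
      P[fun x => dX1 δ N n x * dX2 δ N n x|Ffil (n * N)] =ᵐ[P] 0) := by
  constructor
  · intro l _ x _
    exact diag δ l x
  · intro N hN n hn
    set k := n * N with hk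
    have hm : Ffil k ≤ (inferInstance : MeasurableSpace ℝ) := by
      refine iSup_le fun i => iSup_le fun _ => ?_
      exact measurable_iff_comap_le.mp (measurable_rad i)
    have hle : Ffil k ≤ MeasurableSpace.comap (fun x : ℝ => ⌊(2:ℝ)^(k+1) * x⌋) ⊤ := by
      refine iSup_le fun i => iSup_le fun hi => ?_
      have hik : i ≤ k := Finset.mem_Iic.mp hi
      have hfun : rad i = (fun m : ℤ => if Odd (m / (2^(k+1-(i+1)) : ℤ)) then (1:ℝ) else -1) ∘
          (fun x : ℝ => ⌊(2:ℝ)^(k+1) * x⌋) := by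
        funext x
        exact rad_of_floor i (k+1) (by omega) x
      rw [hfun, ← MeasurableSpace.comap_comp]
      exact MeasurableSpace.comap_mono le_top
    have hterm : ∀ a b : ℕ, Integrable (fun x => dB1 δ (k+a) x * dB2 δ (k+b) x) P := by
      intro a b
      refine integrable_bounded ((measurable_dB1 δ (k+a)).mul (measurable_dB2 δ (k+b)))
        (Real.sqrt (2*δ) * Real.sqrt (2*δ)) fun x => ?_
      rw [abs_mul]
      exact mul_le_mul (abs_dB1_le δ (k+a) x) (abs_dB2_le δ (k+b) x) (abs_nonneg _)
        (Real.sqrt_nonneg _)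
    have hexp : (fun x => dX1 δ N n x * dX2 δ N n x)
        = fun x => ∑ a ∈ Finset.Icc 1 N, ∑ b ∈ Finset.Icc 1 N,
            dB1 δ (k+a) x * dB2 δ (k+b) x := by
      funext x
      rw [dX1, dX2, Finset.sum_mul_sum]
    have hf : Integrable (fun x => dX1 δ N n x * dX2 δ N n x) P := by
      rw [hexp]
      exact integrable_finset_sum _ fun a _ => integrable_finset_sum _ fun b _ => hterm a b
    refine (ae_eq_condExp_of_forall_setIntegral_eq hm hf
      (fun s _ _ => integrableOn_zero) (fun s hsm _ => ?_) ?_).symm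
    · obtain ⟨t, -, rfl⟩ := MeasurableSpace.measurableSet_comap.mp (hle s hsm)
      rw [integral_zero]
      symm
      rw [hexp]
      rw [integral_finset_sum _ fun a _ =>
        (integrable_finset_sum _ fun b _ => hterm a b).restrict]
      refine Finset.sum_eq_zero fun a haI => ?_
      rw [integral_finset_sum _ fun b _ => (hterm a b).restrict]
      refine Finset.sum_eq_zero fun b hbI => ?_
      rcases lt_trichotomy a b with h | h | h
      · exact cross1 δ k a b (Finset.mem_Icc.mp haI).1 h t
      · subst h
        have : (fun x => dB1 δ (k+a) x * dB2 δ (k+a) x) = fun _ => (0:ℝ) :=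
          funext fun x => diag δ (k+a) x
        rw [this, integral_zero]
      · exact cross2 δ k a b (Finset.mem_Icc.mp hbI).1 h t
    · exact StronglyMeasurable.aestronglyMeasurable
        (@stronglyMeasurable_const _ _ (Ffil k) _ 0)

end
end

section
/- Let T > 0, N ≥ 1 an integer, δ = T N^{−5}, ε = 1/N, and assume N√(2δ) ≤ ε. Then {x ∈ [0,1) : |X_n(x)| ≤ 1 − ε for all 0 ≤ n ≤ N⁴} ⊆ {x ∈ [0,1) : |B̃¹_k(x)| ≤ 1 for all 0 ≤ k ≤ N⁵}, where B̃¹_k = √δ Σ_{l=1}^k ε_l. -/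
open MeasureTheory Filter
open scoped ENNReal MeasureTheory

noncomputable section

lemma rad_sq (l : ℕ) (x : ℝ) : rad l x ^ 2 = 1 := by
  unfold rad; split <;> norm_num

lemma rad_cases (l : ℕ) (x : ℝ) : rad l x = 1 ∨ rad l x = -1 := by
  unfold rad; split <;> simp

lemma dB_sq_add (δ : ℝ) (l : ℕ) (x : ℝ) :
    dB1 δ l x ^ 2 + dB2 δ l x ^ 2 = Real.sqrt (2 * δ) ^ 2 := by
  have hs := rad_sq l x
  unfold dB1 dB2
  rcases rad_cases (l - 1) x with h | h <;> rw [h] <;> norm_num <;>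
    nlinarith [hs]

lemma sum_dB_eq (δ : ℝ) (k : ℕ) (x : ℝ) :
    B1 δ k x + B2 δ k x = Real.sqrt (2 * δ) * ∑ l ∈ Finset.Icc 1 k, rad l x := by
  unfold B1 B2
  rw [← Finset.sum_add_distrib, Finset.mul_sum]
  refine Finset.sum_congr rfl fun l _ => ?_
  unfold dB1 dB2
  rcases rad_cases (l - 1) x with h | h <;> rw [h] <;> norm_num <;> ring

lemma Bnorm_eq (δ : ℝ) (k : ℕ) (x : ℝ) :
    Bnorm δ k x = ‖(⟨B1 δ k x, B2 δ k x⟩ : ℂ)‖ := by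
  rw [Complex.norm_def, Complex.normSq_mk]
  unfold Bnorm
  ring_nf

lemma Bnorm_succ (δ : ℝ) (k : ℕ) (x : ℝ) :
    Bnorm δ (k + 1) x ≤ Bnorm δ k x + Real.sqrt (2 * δ) := by
  have hB1 : B1 δ (k + 1) x = B1 δ k x + dB1 δ (k + 1) x := by
    unfold B1; exact Finset.sum_Icc_succ_top (Nat.le_add_left 1 k) _
  have hB2 : B2 δ (k + 1) x = B2 δ k x + dB2 δ (k + 1) x := by
    unfold B2; exact Finset.sum_Icc_succ_top (Nat.le_add_left 1 k) _
  have habs : ‖(⟨dB1 δ (k + 1) x, dB2 δ (k + 1) x⟩ : ℂ)‖ = Real.sqrt (2 * δ) := by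
    rw [Complex.norm_def, Complex.normSq_mk]
    rw [show dB1 δ (k+1) x * dB1 δ (k+1) x + dB2 δ (k+1) x * dB2 δ (k+1) x
        = dB1 δ (k+1) x ^ 2 + dB2 δ (k+1) x ^ 2 by ring, dB_sq_add]
    exact Real.sqrt_sq (Real.sqrt_nonneg _)
  rw [Bnorm_eq, Bnorm_eq, ← habs]
  have : (⟨B1 δ (k + 1) x, B2 δ (k + 1) x⟩ : ℂ) =
      (⟨B1 δ k x, B2 δ k x⟩ : ℂ) + ⟨dB1 δ (k + 1) x, dB2 δ (k + 1) x⟩ := by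
    apply Complex.ext <;> simp [hB1, hB2]
  rw [this]
  exact norm_add_le _ _

lemma Bnorm_block (δ : ℝ) (m r : ℕ) (x : ℝ) :
    Bnorm δ (m + r) x ≤ Bnorm δ m x + r * Real.sqrt (2 * δ) := by
  induction r with
  | zero => simp
  | succ r ih =>
      calc Bnorm δ (m + (r + 1)) x = Bnorm δ ((m + r) + 1) x := by ring_nf
        _ ≤ Bnorm δ (m + r) x + Real.sqrt (2 * δ) := Bnorm_succ δ _ x
        _ ≤ Bnorm δ m x + r * Real.sqrt (2 * δ) + Real.sqrt (2 * δ) := by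
            linarith
        _ = Bnorm δ m x + (r + 1 : ℕ) * Real.sqrt (2 * δ) := by
            push_cast; ring

lemma abs_add_le_sqrt_two (a b : ℝ) :
    |a + b| ≤ Real.sqrt 2 * Real.sqrt (a ^ 2 + b ^ 2) := by
  rw [← Real.sqrt_sq_eq_abs, ← Real.sqrt_mul (by norm_num : (0:ℝ) ≤ 2)]
  apply Real.sqrt_le_sqrt
  nlinarith [sq_nonneg (a - b)]

/-- if the coarse walk never leaves `(1-ε)𝔻` then the rotated
one-dimensional Rademacher walk never leaves `[-1,1]`. -/
theorem statement12 (T : ℝ) (hT : 0 < T) (N : ℕ) (hN : 1 ≤ N) (δ ε : ℝ)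
    (hδ : δ = T / (N : ℝ) ^ 5) (hε : ε = 1 / (N : ℝ))
    (h : (N : ℝ) * Real.sqrt (2 * δ) ≤ ε) :
    {x ∈ Set.Ico (0 : ℝ) 1 | ∀ n : ℕ, n ≤ N ^ 4 → Bnorm δ (n * N) x ≤ 1 - ε} ⊆
      {x ∈ Set.Ico (0 : ℝ) 1 | ∀ k : ℕ, k ≤ N ^ 5 →
        |Real.sqrt δ * ∑ l ∈ Finset.Icc 1 k, rad l x| ≤ 1} := by
  rintro x ⟨hx, hwalk⟩
  refine ⟨hx, fun k hk => ?_⟩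
  have hNpos : 0 < (N : ℝ) := by exact_mod_cast hN
  have hδpos : 0 < δ := by rw [hδ]; positivity
  have hs_nonneg : (0:ℝ) ≤ Real.sqrt (2 * δ) := Real.sqrt_nonneg _
  -- decompose k = (k / N) * N + k % N
  set n := k / N with hn
  set r := k % N with hr
  have hkeq : n * N + r = k := by rw [hn, hr]; simpa [Nat.mul_comm] using Nat.div_add_mod k N
  have hkeq' : n * N + r = k := hkeq
  have hnle : n ≤ N ^ 4 := by
    rw [hn]
    calc k / N ≤ N ^ 5 / N := Nat.div_le_div_right hk
      _ = N ^ 4 := by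
          rw [pow_succ]
          exact Nat.mul_div_cancel _ (by omega)
  have hrlt : (r : ℝ) ≤ (N : ℝ) := by
    have : r < N := Nat.mod_lt k (by omega)
    exact_mod_cast this.le
  -- Bnorm at k is at most 1
  have hB : Bnorm δ k x ≤ 1 := by
    have h1 := Bnorm_block δ (n * N) r x
    rw [hkeq] at h1
    have h2 : Bnorm δ (n * N) x ≤ 1 - ε := hwalk n hnle
    have h3 : (r : ℝ) * Real.sqrt (2 * δ) ≤ (N : ℝ) * Real.sqrt (2 * δ) :=
      mul_le_mul_of_nonneg_right hrlt hs_nonneg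
    linarith
  -- relate the one-dimensional sum to B1 + B2
  have hsum := sum_dB_eq δ k x
  have hsplit : Real.sqrt (2 * δ) = Real.sqrt 2 * Real.sqrt δ :=
    Real.sqrt_mul (by norm_num) δ
  have key : Real.sqrt 2 * |Real.sqrt δ * ∑ l ∈ Finset.Icc 1 k, rad l x|
      ≤ Real.sqrt 2 * 1 := by
    have h2pos : (0:ℝ) < Real.sqrt 2 := Real.sqrt_pos.mpr (by norm_num)
    calc Real.sqrt 2 * |Real.sqrt δ * ∑ l ∈ Finset.Icc 1 k, rad l x|
        = |Real.sqrt 2 * (Real.sqrt δ * ∑ l ∈ Finset.Icc 1 k, rad l x)| := by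
          rw [abs_mul _ (Real.sqrt δ * _), abs_of_pos h2pos]
      _ = |B1 δ k x + B2 δ k x| := by rw [← mul_assoc, ← hsplit, hsum]
      _ ≤ Real.sqrt 2 * Real.sqrt (B1 δ k x ^ 2 + B2 δ k x ^ 2) :=
          abs_add_le_sqrt_two _ _
      _ = Real.sqrt 2 * Bnorm δ k x := rfl
      _ ≤ Real.sqrt 2 * 1 := by
          exact mul_le_mul_of_nonneg_left hB h2pos.le
  have h2pos : (0:ℝ) < Real.sqrt 2 := Real.sqrt_pos.mpr (by norm_num)
  exact le_of_mul_le_mul_left key h2pos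

end
end
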